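/- Fix an integer M ≥ 1, reals Ae > 0, 0 < z_th < Ae, r₀, r₁ ∈ (0,1) with r₀ + r₁ = 1, and μ > 0. For σ, σ₀ > 0 set x₁ = (z_th − Ae)/√(σ² + σ₀²/M) and x₂ = z_th/σ₀, and define the posterior probability q₀(σ,σ₀) = (1−Q(x₁))·r₁ / ((1−Q(x₁))·r₁ + (1−Q(x₂))·r₀). Then H₂(q₀(σ,σ₀)) / (σ² + σ₀²/M)^μ → 0 as (σ, σ₀) → (0⁺, 0⁺) (Theorem 2, case N̂₁ = 0: the conditional entropy attenuates super-polynomially in the noise variances). -/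

import Mathlib

open MeasureTheory Filter Real
open scoped Topology

/-- The Gaussian tail function `Q(x) = ∫_x^∞ (1/√(2π)) e^{−u²/2} du`. -/
noncomputable def gaussQ (x : ℝ) : ℝ :=
  ∫ u in Set.Ioi x, (Real.sqrt (2 * Real.pi))⁻¹ * Real.exp (-u ^ 2 / 2)

/-- Binary entropy function. -/
noncomputable def H2 (x : ℝ) : ℝ := -x * Real.log x - (1 - x) * Real.log (1 - x)

lemma phi_integrable :
    Integrable (fun u : ℝ => (Real.sqrt (2 * Real.pi))⁻¹ * Real.exp (-u ^ 2 / 2)) := by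
  have h : Integrable (fun u : ℝ => Real.exp (-(1/2) * u ^ 2)) :=
    integrable_exp_neg_mul_sq (by norm_num)
  have he : (fun u : ℝ => Real.exp (-(1/2) * u ^ 2)) = fun u : ℝ => Real.exp (-u ^ 2 / 2) := by
    funext u; ring_nf
  rw [he] at h
  exact h.const_mul _

lemma phi_total : (∫ u : ℝ, (Real.sqrt (2 * Real.pi))⁻¹ * Real.exp (-u ^ 2 / 2)) = 1 := by
  have he : (fun u : ℝ => Real.exp (-(1/2) * u ^ 2)) = fun u : ℝ => Real.exp (-u ^ 2 / 2) := by
    funext u; ring_nf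
  rw [integral_const_mul, ← he, integral_gaussian]
  rw [show (π / (1/2)) = 2 * π by ring]
  rw [inv_mul_cancel₀ (by positivity : Real.sqrt (2*π) ≠ 0)]

lemma gaussQ_nonneg (x : ℝ) : 0 ≤ gaussQ x := by
  apply setIntegral_nonneg measurableSet_Ioi
  intro u _
  positivity

lemma gaussQ_symm (x : ℝ) : 1 - gaussQ x = gaussQ (-x) := by
  have h1 : (∫ u in Set.Iic x, (Real.sqrt (2 * Real.pi))⁻¹ * Real.exp (-u ^ 2 / 2)) + gaussQ x = 1 := by
    rw [gaussQ, intervalIntegral.integral_Iic_add_Ioi phi_integrable.integrableOn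
      phi_integrable.integrableOn, phi_total]
  have h2 : gaussQ (-x) = ∫ u in Set.Iic x, (Real.sqrt (2 * Real.pi))⁻¹ * Real.exp (-u ^ 2 / 2) := by
    rw [gaussQ, ← integral_comp_neg_Iic x
      (fun u => (Real.sqrt (2 * Real.pi))⁻¹ * Real.exp (-u ^ 2 / 2))]
    simp [neg_pow]
  linarith

lemma integral_exp_neg_mul_Ioi {t : ℝ} (ht : 0 < t) :
    (∫ u in Set.Ioi t, Real.exp (-t * u)) = Real.exp (-t * t) / t := by
  have hderiv : ∀ u ∈ Set.Ici t,
      HasDerivAt (fun u => -Real.exp (-t * u) / t) (Real.exp (-t * u)) u := by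
    intro u _
    have h := (((hasDerivAt_id u).const_mul (-t)).exp).neg.div_const t
    refine h.congr_deriv ?_
    rw [div_eq_iff ht.ne']; simp only [id]; ring
  have htop : Tendsto (fun u => -Real.exp (-t * u) / t) atTop (𝓝 0) := by
    have h1 : Tendsto (fun u : ℝ => -t * u) atTop atBot :=
      tendsto_id.const_mul_atTop_of_neg (neg_neg_iff_pos.2 ht)
    have := ((tendsto_exp_atBot.comp h1).neg).div_const t
    simpa using this
  have := integral_Ioi_of_hasDerivAt_of_tendsto' hderiv (exp_neg_integrableOn_Ioi t ht) htop
  rw [this]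
  ring

lemma gaussQ_tail {t : ℝ} (ht : 0 < t) : gaussQ t ≤ Real.exp (-t ^ 2 / 2) / t := by
  have hsq : (1:ℝ) ≤ Real.sqrt (2 * π) := by
    rw [show (1:ℝ) = Real.sqrt 1 by simp]
    apply Real.sqrt_le_sqrt
    nlinarith [Real.pi_gt_three]
  have hmono : gaussQ t ≤ ∫ u in Set.Ioi t,
      ((Real.sqrt (2 * Real.pi))⁻¹ * Real.exp (t ^ 2 / 2)) * Real.exp (-t * u) := by
    rw [gaussQ]
    apply setIntegral_mono phi_integrable.integrableOn
      (((exp_neg_integrableOn_Ioi t ht).const_mul _))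
    intro u
    dsimp only
    rw [mul_assoc, ← Real.exp_add]
    apply mul_le_mul_of_nonneg_left _ (by positivity)
    apply Real.exp_le_exp.2
    nlinarith [sq_nonneg (u - t)]
  calc gaussQ t ≤ _ := hmono
    _ = (Real.sqrt (2 * Real.pi))⁻¹ * (Real.exp (-t ^ 2 / 2) / t) := by
        rw [integral_const_mul, integral_exp_neg_mul_Ioi ht, mul_assoc, mul_div_assoc',
          ← Real.exp_add, show t ^ 2 / 2 + -t * t = -t ^ 2 / 2 by ring]
    _ ≤ 1 * (Real.exp (-t ^ 2 / 2) / t) := by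
        apply mul_le_mul_of_nonneg_right _ (by positivity)
        rw [inv_le_one_iff₀]; right; exact hsq
    _ = _ := one_mul _

lemma gaussQ_le_half {t : ℝ} (ht : 2 ≤ t) : gaussQ t ≤ 1 / 2 := by
  have h0 : (0:ℝ) < t := by linarith
  calc gaussQ t ≤ Real.exp (-t ^ 2 / 2) / t := gaussQ_tail h0
    _ ≤ 1 / t := by gcongr; exact Real.exp_le_one_iff.2 (by nlinarith)
    _ ≤ 1 / 2 := one_div_le_one_div_of_le (by norm_num) ht

lemma H2_nonneg {x : ℝ} (h0 : 0 ≤ x) (h1 : x ≤ 1) : 0 ≤ H2 x := by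
  have l1 : Real.log x ≤ 0 := Real.log_nonpos h0 h1
  have l2 : Real.log (1 - x) ≤ 0 := Real.log_nonpos (by linarith) (by linarith)
  have : 0 ≤ -x * Real.log x := by
    rw [neg_mul, le_neg]; exact mul_nonpos_of_nonneg_of_nonpos h0 l1 |>.trans_eq (by ring)
  have h2 : 0 ≤ -((1 - x) * Real.log (1 - x)) := by
    rw [le_neg, neg_zero]; exact mul_nonpos_of_nonneg_of_nonpos (by linarith) l2
  unfold H2; linarith

lemma H2_le_sqrt {x : ℝ} (h0 : 0 ≤ x) (h1 : x < 1) : H2 x ≤ 3 * Real.sqrt x := by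
  have hs : 0 ≤ Real.sqrt x := Real.sqrt_nonneg x
  have part2 : -(1 - x) * Real.log (1 - x) ≤ x := by
    have hy : (0:ℝ) < 1 - x := by linarith
    have := Real.log_le_sub_one_of_pos (inv_pos.2 hy)
    rw [Real.log_inv] at this
    have h3 : -Real.log (1 - x) ≤ x / (1 - x) := by
      have h4 : (1 - x)⁻¹ - 1 = x / (1 - x) := by field_simp; ring
      linarith [h4 ▸ this]
    calc -(1 - x) * Real.log (1 - x) = (1 - x) * (-Real.log (1 - x)) := by ring
      _ ≤ (1 - x) * (x / (1 - x)) := mul_le_mul_of_nonneg_left h3 hy.le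
      _ = x := by field_simp
  have hx_le : x ≤ Real.sqrt x := by
    nlinarith [Real.sq_sqrt h0, Real.sqrt_nonneg x, sq_nonneg (Real.sqrt x - x)]
  rcases eq_or_lt_of_le h0 with h | hpos
  · simp [H2, ← h]
  have part1 : -x * Real.log x ≤ 2 * Real.sqrt x := by
    have hspos : 0 < Real.sqrt x := Real.sqrt_pos.2 hpos
    have hlog : Real.log ((Real.sqrt x)⁻¹) ≤ (Real.sqrt x)⁻¹ - 1 :=
      Real.log_le_sub_one_of_pos (inv_pos.2 hspos)
    rw [Real.log_inv, Real.log_sqrt h0] at hlog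
    have hlx : -Real.log x ≤ 2 * (Real.sqrt x)⁻¹ := by linarith [inv_pos.2 hspos]
    calc -x * Real.log x = x * (-Real.log x) := by ring
      _ ≤ x * (2 * (Real.sqrt x)⁻¹) := mul_le_mul_of_nonneg_left hlx h0
      _ = 2 * (x / Real.sqrt x) := by ring
      _ = 2 * Real.sqrt x := by rw [Real.div_sqrt]
  unfold H2
  nlinarith [part1, part2, hx_le]

lemma G_tendsto {c μ : ℝ} (hc : 0 < c) :
    Tendsto (fun t : ℝ => Real.exp (-c / t) / t ^ μ) (nhdsWithin 0 (Set.Ioi 0)) (nhds 0) := by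
  have h1 := (tendsto_rpow_mul_exp_neg_mul_atTop_nhds_zero μ c hc).comp tendsto_inv_nhdsGT_zero
  refine h1.congr' ?_
  filter_upwards [self_mem_nhdsWithin] with t ht
  have ht' : (0:ℝ) < t := ht
  simp only [Function.comp]
  rw [Real.inv_rpow ht'.le, ← div_eq_inv_mul, neg_mul, ← div_eq_mul_inv, neg_div]

set_option maxHeartbeats 1000000 in
theorem stmt_3 (M : ℕ) (hM : 1 ≤ M) (Ae zth r0 r1 μ : ℝ)
    (hAe : 0 < Ae) (hz1 : 0 < zth) (hz2 : zth < Ae)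
    (hr0 : r0 ∈ Set.Ioo (0 : ℝ) 1) (hr1 : r1 ∈ Set.Ioo (0 : ℝ) 1)
    (hsum : r0 + r1 = 1) (hμ : 0 < μ) :
    Tendsto (fun p : ℝ × ℝ =>
        H2 ((1 - gaussQ ((zth - Ae) / Real.sqrt (p.1 ^ 2 + p.2 ^ 2 / M))) * r1 /
            ((1 - gaussQ ((zth - Ae) / Real.sqrt (p.1 ^ 2 + p.2 ^ 2 / M))) * r1 +
              (1 - gaussQ (zth / p.2)) * r0)) /
          (p.1 ^ 2 + p.2 ^ 2 / M) ^ μ)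
      ((nhdsWithin 0 (Set.Ioi 0)) ×ˢ (nhdsWithin 0 (Set.Ioi 0))) (nhds 0) := by
  obtain ⟨hr0l, hr0u⟩ := hr0
  obtain ⟨hr1l, hr1u⟩ := hr1
  have hd : 0 < Ae - zth := by linarith
  set c : ℝ := (Ae - zth) ^ 2 / 2 with hc_def
  have hc : 0 < c := by positivity
  set C : ℝ := 2 * r1 / (r0 * (Ae - zth)) with hC_def
  have hC : 0 < C := by positivity
  have hMpos : (0:ℝ) < (M : ℝ) := by exact_mod_cast hM
  set L := (nhdsWithin (0:ℝ) (Set.Ioi 0)) ×ˢ (nhdsWithin (0:ℝ) (Set.Ioi 0)) with hL_def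
  have hmem : ∀ᶠ p : ℝ × ℝ in L, 0 < p.1 ∧ 0 < p.2 := by
    filter_upwards [Filter.prod_mem_prod self_mem_nhdsWithin self_mem_nhdsWithin] with p hp
    exact ⟨hp.1, hp.2⟩
  have hVpos : ∀ p : ℝ × ℝ, 0 < p.1 → 0 < p.1 ^ 2 + p.2 ^ 2 / (M:ℝ) := by
    intro p hp
    have h1 : 0 < p.1 ^ 2 := pow_pos hp 2
    have h2 : 0 ≤ p.2 ^ 2 / (M:ℝ) := by positivity
    linarith
  have hv : Tendsto (fun p : ℝ × ℝ => p.1 ^ 2 + p.2 ^ 2 / (M:ℝ)) L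
      (nhdsWithin 0 (Set.Ioi 0)) := by
    rw [tendsto_nhdsWithin_iff]
    constructor
    · have hcont : Continuous fun p : ℝ × ℝ => p.1 ^ 2 + p.2 ^ 2 / (M:ℝ) := by continuity
      have h0 : Tendsto (id : ℝ × ℝ → ℝ × ℝ) L (nhds ((0:ℝ), (0:ℝ))) := by
        rw [nhds_prod_eq]
        exact tendsto_id.mono_left (Filter.prod_mono nhdsWithin_le_nhds nhdsWithin_le_nhds)
      have := (hcont.tendsto ((0:ℝ), (0:ℝ))).comp h0
      simpa using this
    · filter_upwards [hmem] with p hp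
      exact hVpos p hp.1
  have hsnd : Tendsto (fun p : ℝ × ℝ => p.2) L (nhdsWithin 0 (Set.Ioi 0)) := tendsto_snd
  have hx2 : Tendsto (fun p : ℝ × ℝ => zth / p.2) L atTop := by
    have h := (tendsto_inv_nhdsGT_zero.comp hsnd).const_mul_atTop hz1
    refine h.congr fun p => ?_
    simp [Function.comp, div_eq_mul_inv]
  have hev2 : ∀ᶠ p : ℝ × ℝ in L, 2 ≤ zth / p.2 := hx2.eventually_ge_atTop 2
  have hev3 : ∀ᶠ p : ℝ × ℝ in L, p.1 ^ 2 + p.2 ^ 2 / (M:ℝ) ≤ 1 :=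
    (hv.mono_right nhdsWithin_le_nhds).eventually (eventually_le_nhds (by norm_num))
  have hev4 : ∀ᶠ p : ℝ × ℝ in L,
      C * Real.exp (-c / (p.1 ^ 2 + p.2 ^ 2 / (M:ℝ))) ≤ 1/2 := by
    have ht1 : Tendsto (fun p : ℝ × ℝ => c / (p.1 ^ 2 + p.2 ^ 2 / (M:ℝ))) L atTop := by
      have h := (tendsto_inv_nhdsGT_zero.comp hv).const_mul_atTop hc
      refine h.congr fun p => ?_
      simp [Function.comp, div_eq_mul_inv]
    have ht2 : Tendsto (fun p : ℝ × ℝ =>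
        C * Real.exp (-c / (p.1 ^ 2 + p.2 ^ 2 / (M:ℝ)))) L (nhds 0) := by
      have h := (tendsto_exp_atBot.comp (tendsto_neg_atTop_atBot.comp ht1)).const_mul C
      rw [mul_zero] at h
      refine h.congr fun p => ?_
      simp [Function.comp, neg_div]
    exact ht2.eventually (eventually_le_nhds (by norm_num))
  have hGv : Tendsto (fun p : ℝ × ℝ =>
      3 * Real.sqrt C * (Real.exp (-(c/2) / (p.1 ^ 2 + p.2 ^ 2 / (M:ℝ))) /
        (p.1 ^ 2 + p.2 ^ 2 / (M:ℝ)) ^ μ)) L (nhds 0) := by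
    have h := ((G_tendsto (μ := μ) (half_pos hc)).comp hv).const_mul (3 * Real.sqrt C)
    rw [mul_zero] at h
    exact h
  have key : ∀ᶠ p : ℝ × ℝ in L,
      0 ≤ H2 ((1 - gaussQ ((zth - Ae) / Real.sqrt (p.1 ^ 2 + p.2 ^ 2 / M))) * r1 /
            ((1 - gaussQ ((zth - Ae) / Real.sqrt (p.1 ^ 2 + p.2 ^ 2 / M))) * r1 +
              (1 - gaussQ (zth / p.2)) * r0)) /
          (p.1 ^ 2 + p.2 ^ 2 / M) ^ μ ∧
      H2 ((1 - gaussQ ((zth - Ae) / Real.sqrt (p.1 ^ 2 + p.2 ^ 2 / M))) * r1 /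
            ((1 - gaussQ ((zth - Ae) / Real.sqrt (p.1 ^ 2 + p.2 ^ 2 / M))) * r1 +
              (1 - gaussQ (zth / p.2)) * r0)) /
          (p.1 ^ 2 + p.2 ^ 2 / M) ^ μ ≤
      3 * Real.sqrt C * (Real.exp (-(c/2) / (p.1 ^ 2 + p.2 ^ 2 / (M:ℝ))) /
        (p.1 ^ 2 + p.2 ^ 2 / (M:ℝ)) ^ μ) := by
    filter_upwards [hmem, hev2, hev3, hev4] with p hp h2 h3 h4
    set V : ℝ := p.1 ^ 2 + p.2 ^ 2 / (M:ℝ) with hV_def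
    have hV : 0 < V := hVpos p hp.1
    set s : ℝ := Real.sqrt V with hs_def
    have hs : 0 < s := Real.sqrt_pos.2 hV
    have hss : s ^ 2 = V := Real.sq_sqrt hV.le
    have hs1 : s ≤ 1 := by
      rw [hs_def, show (1:ℝ) = Real.sqrt 1 by rw [Real.sqrt_one]]
      exact Real.sqrt_le_sqrt h3
    set A : ℝ := 1 - gaussQ ((zth - Ae) / s) with hA_def
    have hA_eq : A = gaussQ ((Ae - zth) / s) := by
      rw [hA_def, gaussQ_symm, show -((zth - Ae) / s) = (Ae - zth) / s by ring]
    have hA0 : 0 ≤ A := hA_eq ▸ gaussQ_nonneg _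
    have htpos : 0 < (Ae - zth) / s := div_pos hd hs
    have hA_le : A ≤ Real.exp (-c / V) * s / (Ae - zth) := by
      rw [hA_eq]
      refine (gaussQ_tail htpos).trans_eq ?_
      rw [div_pow, hss, div_div_eq_mul_div,
        show -((Ae - zth) ^ 2 / V) / 2 = -c / V by rw [hc_def]; ring]
    have hA2 : A ≤ Real.exp (-c / V) / (Ae - zth) := by
      refine hA_le.trans ?_
      rw [div_le_div_iff_of_pos_right hd] <;> try skip
      nlinarith [Real.exp_pos (-c / V)]
    have hB : 1/2 ≤ 1 - gaussQ (zth / p.2) := by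
      have := gaussQ_le_half h2
      linarith
    set den : ℝ := A * r1 + (1 - gaussQ (zth / p.2)) * r0 with hden_def
    have hnum0 : 0 ≤ A * r1 := mul_nonneg hA0 hr1l.le
    have hden_ge : r0 / 2 ≤ den := by
      have hb : r0 / 2 ≤ (1 - gaussQ (zth / p.2)) * r0 := by nlinarith
      linarith
    have hden_pos : 0 < den := lt_of_lt_of_le (show (0:ℝ) < r0/2 by positivity) hden_ge
    set q : ℝ := A * r1 / den with hq_def
    have hq0 : 0 ≤ q := div_nonneg hnum0 hden_pos.le
    have hq_ub : q ≤ C * Real.exp (-c / V) := by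
      calc q ≤ A * r1 / (r0 / 2) := by
            apply div_le_div_of_nonneg_left hnum0 (by positivity) hden_ge
        _ = (2 * r1 / r0) * A := by field_simp
        _ ≤ (2 * r1 / r0) * (Real.exp (-c / V) / (Ae - zth)) := by
            apply mul_le_mul_of_nonneg_left hA2 (by positivity)
        _ = C * Real.exp (-c / V) := by rw [hC_def]; field_simp
    have hq_half : q ≤ 1/2 := hq_ub.trans h4
    have hsqrt_eq : Real.sqrt (C * Real.exp (-c / V)) = Real.sqrt C * Real.exp (-(c/2) / V) := by
      rw [Real.sqrt_mul hC.le, ← Real.exp_half, show -c / V / 2 = -(c/2) / V by ring]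
    have hH2 : H2 q ≤ 3 * (Real.sqrt C * Real.exp (-(c/2) / V)) := by
      refine (H2_le_sqrt hq0 (by linarith)).trans ?_
      rw [← hsqrt_eq]
      exact mul_le_mul_of_nonneg_left (Real.sqrt_le_sqrt hq_ub) (by norm_num)
    have hVμ : 0 < V ^ μ := Real.rpow_pos_of_pos hV μ
    have hH2_0 : 0 ≤ H2 q := H2_nonneg hq0 (by linarith)
    constructor
    · exact div_nonneg hH2_0 hVμ.le
    · calc H2 q / V ^ μ ≤ 3 * (Real.sqrt C * Real.exp (-(c/2) / V)) / V ^ μ :=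
            div_le_div_of_nonneg_right hH2 hVμ.le
        _ = 3 * Real.sqrt C * (Real.exp (-(c/2) / V) / V ^ μ) := by ring
  exact squeeze_zero' (key.mono fun p h => h.1) (key.mono fun p h => h.2) hGv
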